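/- arXiv:1010.1706 — 2 statements merged into one kernel-verified Lean document; each statement's English description precedes it below -/
import Mathlib

section
/- Let $0 < \alpha < 1$, $p = n/(n+\alpha)$, and let $a$ be an integrable function supported in the cube $Q = Q(x_0, r)$ with $\int a = 0$ and $\int_Q |a(y)|\,dy \le |Q| \cdot w(Q)^{-1/p}$. Then for every $x \notin 2\sqrt{n}\, Q$, the intrinsic Littlewood–Paley $g$-function satisfies $g_\alpha(a)(x) \le C \cdot \frac{r^{n+\alpha}}{w(Q)^{1/p}} \cdot \frac{1}{|x - x_0|^{n+\alpha}}$, with $C$ depending only on $n$ and $\alpha$. -/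
open MeasureTheory Set Metric ENNReal

noncomputable section

/-- The axis-parallel cube centered at `x0` with side length `r`. -/
def cube (n : ℕ) (x0 : EuclideanSpace ℝ (Fin n)) (r : ℝ) : Set (EuclideanSpace ℝ (Fin n)) :=
  {x | ∀ i, |x i - x0 i| ≤ r / 2}

/-- The weighted measure `w(E) = ∫_E w`. -/
def wm (n : ℕ) (w : EuclideanSpace ℝ (Fin n) → ℝ) (s : Set (EuclideanSpace ℝ (Fin n))) : ℝ≥0∞ :=
  ∫⁻ x in s, ENNReal.ofReal (w x)

/-- The intrinsic Hölder class 𝒞_α. -/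
def holderClass (n : ℕ) (α : ℝ) : Set (EuclideanSpace ℝ (Fin n) → ℝ) :=
  {φ | Function.support φ ⊆ closedBall 0 1 ∧ (∫ x, φ x = 0) ∧
    ∀ x x', |φ x - φ x'| ≤ ‖x - x'‖ ^ α}

/-- `f * φ_t (x)` where `φ_t(x) = t^{-n} φ(x/t)`. -/
def convDil (n : ℕ) (f φ : EuclideanSpace ℝ (Fin n) → ℝ) (t : ℝ) (x : EuclideanSpace ℝ (Fin n)) : ℝ :=
  ∫ y, f y * ((t ^ n)⁻¹ * φ (t⁻¹ • (x - y)))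

/-- `A_α(f)(y,t) = sup_{φ ∈ 𝒞_α} |f * φ_t(y)|`. -/
def intA (n : ℕ) (α : ℝ) (f : EuclideanSpace ℝ (Fin n) → ℝ) (y : EuclideanSpace ℝ (Fin n)) (t : ℝ) : ℝ≥0∞ :=
  ⨆ φ ∈ holderClass n α, ENNReal.ofReal |convDil n f φ t y|

/-- The intrinsic Littlewood–Paley g-function. -/
def gFun (n : ℕ) (α : ℝ) (f : EuclideanSpace ℝ (Fin n) → ℝ) (x : EuclideanSpace ℝ (Fin n)) : ℝ≥0∞ :=
  (∫⁻ t in Ioi (0 : ℝ), (intA n α f x t) ^ 2 * (ENNReal.ofReal t)⁻¹) ^ (1/2 : ℝ)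

/-- The varying-aperture intrinsic square function `S_{α,β}`. -/
def sFun (n : ℕ) (α β : ℝ) (f : EuclideanSpace ℝ (Fin n) → ℝ) (x : EuclideanSpace ℝ (Fin n)) : ℝ≥0∞ :=
  (∫⁻ t in Ioi (0 : ℝ), ∫⁻ y in ball x (β * t),
      (intA n α f y t) ^ 2 * (ENNReal.ofReal (t ^ (n + 1)))⁻¹) ^ (1/2 : ℝ)

/-- The intrinsic `g^*_λ` function. -/
def gStar (n : ℕ) (α lam : ℝ) (f : EuclideanSpace ℝ (Fin n) → ℝ) (x : EuclideanSpace ℝ (Fin n)) : ℝ≥0∞ :=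
  (∫⁻ t in Ioi (0 : ℝ), ∫⁻ y,
      (ENNReal.ofReal (t / (t + ‖x - y‖))) ^ (lam * n) *
        (intA n α f y t) ^ 2 * (ENNReal.ofReal (t ^ (n + 1)))⁻¹) ^ (1/2 : ℝ)

/-- The `A_1` condition with constant `A`. -/
def isA1 (n : ℕ) (w : EuclideanSpace ℝ (Fin n) → ℝ) (A : ℝ) : Prop :=
  ∀ (x0 : EuclideanSpace ℝ (Fin n)) (r : ℝ), 0 < r →
    (∫ x in cube n x0 r, w x) ≤ A * r ^ n * essInf w (volume.restrict (cube n x0 r))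

/-- The `A_q` condition, `q > 1`, with constant `A`. -/
def isAq (n : ℕ) (w : EuclideanSpace ℝ (Fin n) → ℝ) (q A : ℝ) : Prop :=
  ∀ (x0 : EuclideanSpace ℝ (Fin n)) (r : ℝ), 0 < r →
    ((r ^ n)⁻¹ * ∫ x in cube n x0 r, w x) *
      ((r ^ n)⁻¹ * ∫ x in cube n x0 r, (w x) ^ (-(1 / (q - 1)) : ℝ)) ^ (q - 1) ≤ A

end

/-- coordinate bound -/
lemma abs_coord_le_norm {n : ℕ} (z : EuclideanSpace ℝ (Fin n)) (i : Fin n) : |z i| ≤ ‖z‖ := by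
  rw [EuclideanSpace.norm_eq, ← Real.sqrt_sq_eq_abs]
  apply Real.sqrt_le_sqrt
  have := Finset.single_le_sum (f := fun j => ‖z j‖ ^ 2) (fun j _ => sq_nonneg _)
    (Finset.mem_univ i)
  simpa [Real.norm_eq_abs, sq_abs] using this

lemma norm_le_sqrt_mul {n : ℕ} (z : EuclideanSpace ℝ (Fin n)) (c : ℝ) (hc : 0 ≤ c)
    (h : ∀ i, |z i| ≤ c) : ‖z‖ ≤ Real.sqrt n * c := by
  rw [EuclideanSpace.norm_eq]
  have : ∑ i, ‖z i‖ ^ 2 ≤ (n : ℝ) * c ^ 2 := by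
    calc ∑ i, ‖z i‖ ^ 2 ≤ ∑ _i : Fin n, c ^ 2 := by
          apply Finset.sum_le_sum; intro i _
          have := h i
          rw [Real.norm_eq_abs]
          nlinarith [abs_nonneg (z i)]
      _ = (n : ℝ) * c ^ 2 := by simp [mul_comm]
  calc Real.sqrt (∑ i, ‖z i‖ ^ 2) ≤ Real.sqrt ((n : ℝ) * c ^ 2) := Real.sqrt_le_sqrt this
    _ = Real.sqrt n * c := by
        rw [Real.sqrt_mul (Nat.cast_nonneg n), Real.sqrt_sq hc]

/-- Hölder functions are continuous -/
lemma holder_continuous {n : ℕ} {α : ℝ} (hα : 0 < α) (φ : EuclideanSpace ℝ (Fin n) → ℝ)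
    (hφ : ∀ x x', |φ x - φ x'| ≤ ‖x - x'‖ ^ α) : Continuous φ := by
  rw [continuous_iff_continuousAt]
  intro x
  rw [Metric.continuousAt_iff]
  intro ε hε
  refine ⟨ε ^ (1/α), Real.rpow_pos_of_pos hε _, fun {x'} hd => ?_⟩
  have h1 : |φ x' - φ x| ≤ ‖x' - x‖ ^ α := hφ x' x
  have h2 : ‖x' - x‖ ^ α < (ε ^ (1/α)) ^ α := by
    apply Real.rpow_lt_rpow (norm_nonneg _) _ hα
    rwa [dist_eq_norm] at hd
  have h3 : (ε ^ (1/α)) ^ α = ε := by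
    rw [← Real.rpow_mul hε.le, one_div, inv_mul_cancel₀ hα.ne', Real.rpow_one]
  rw [Real.dist_eq]
  calc |φ x' - φ x| ≤ ‖x' - x‖ ^ α := h1
    _ < ε := by rw [← h3]; exact h2

/-- global bound on Hölder class functions -/
lemma holder_bdd {n : ℕ} (hn : 1 ≤ n) {α : ℝ} (hα0 : 0 < α) (hα1 : α ≤ 1)
    {φ : EuclideanSpace ℝ (Fin n) → ℝ} (hφ : φ ∈ holderClass n α) (v : EuclideanSpace ℝ (Fin n)) :
    |φ v| ≤ 4 := by
  obtain ⟨hsupp, -, hhol⟩ := hφ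
  by_cases hv : φ v = 0
  · simp [hv]
  have hv1 : ‖v‖ ≤ 1 := by
    have := hsupp (Function.mem_support.2 hv)
    simpa using this
  have : Nonempty (Fin n) := ⟨⟨0, hn⟩⟩
  set u : EuclideanSpace ℝ (Fin n) := EuclideanSpace.single (Classical.arbitrary (Fin n)) (3:ℝ)
  have hu : ‖u‖ = 3 := by simp [u, EuclideanSpace.norm_single]
  have hφu : φ u = 0 := by
    by_contra h
    have := hsupp (Function.mem_support.2 h)
    simp only [mem_closedBall, dist_zero_right] at this
    rw [hu] at this; norm_num at this
  have h1 : |φ v| ≤ ‖v - u‖ ^ α := by simpa [hφu] using hhol v u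
  have h2 : ‖v - u‖ ≤ 4 := by
    calc ‖v - u‖ ≤ ‖v‖ + ‖u‖ := norm_sub_le _ _
      _ ≤ 4 := by rw [hu]; linarith
  calc |φ v| ≤ ‖v - u‖ ^ α := h1
    _ ≤ (4:ℝ) ^ α := Real.rpow_le_rpow (norm_nonneg _) h2 hα0.le
    _ ≤ (4:ℝ) ^ (1:ℝ) := Real.rpow_le_rpow_of_exponent_le (by norm_num) hα1
    _ = 4 := by norm_num

open MeasureTheory in
/-- vanishing when t is smaller than distance to the support -/
lemma conv_vanish {n : ℕ} {α : ℝ} {a φ : EuclideanSpace ℝ (Fin n) → ℝ}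
    (hφ : φ ∈ holderClass n α) {t : ℝ} (ht : 0 < t) {x : EuclideanSpace ℝ (Fin n)}
    (hfar : ∀ y, a y ≠ 0 → t < ‖x - y‖) :
    convDil n a φ t x = 0 := by
  have : ∀ y, a y * ((t ^ n)⁻¹ * φ (t⁻¹ • (x - y))) = 0 := by
    intro y
    by_cases hy : a y = 0
    · simp [hy]
    have hd : t < ‖x - y‖ := hfar y hy
    have hnorm : 1 < ‖t⁻¹ • (x - y)‖ := by
      rw [norm_smul, Real.norm_eq_abs, abs_of_pos (inv_pos.2 ht)]
      rw [← div_eq_inv_mul, lt_div_iff₀ ht]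
      simpa using hd
    have hφ0 : φ (t⁻¹ • (x - y)) = 0 := by
      by_contra h
      have := hφ.1 (Function.mem_support.2 h)
      simp only [Metric.mem_closedBall, dist_zero_right] at this
      linarith
    simp [hφ0]
  simp only [convDil]
  rw [show (fun y => a y * ((t ^ n)⁻¹ * φ (t⁻¹ • (x - y)))) = fun _ => (0:ℝ) from funext this]
  simp

open MeasureTheory in
/-- cancellation bound -/
lemma conv_bound {n : ℕ} (hn : 1 ≤ n) {α : ℝ} (hα0 : 0 < α) (hα1 : α ≤ 1)
    {a : EuclideanSpace ℝ (Fin n) → ℝ} (ha : Integrable a volume) (hzero : (∫ y, a y) = 0)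
    {x0 : EuclideanSpace ℝ (Fin n)} {ρ : ℝ} (hρ : 0 ≤ ρ)
    (hsupp : ∀ y, a y ≠ 0 → ‖y - x0‖ ≤ ρ)
    {φ : EuclideanSpace ℝ (Fin n) → ℝ} (hφ : φ ∈ holderClass n α)
    {t : ℝ} (ht : 0 < t) (x : EuclideanSpace ℝ (Fin n)) :
    |convDil n a φ t x| ≤ (t ^ n)⁻¹ * (ρ / t) ^ α * ∫ y, |a y| := by
  have hφc : Continuous φ := holder_continuous hα0 φ hφ.2.2
  set ψ : EuclideanSpace ℝ (Fin n) → ℝ := fun y => (t ^ n)⁻¹ * φ (t⁻¹ • (x - y)) with hψ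
  have hψc : Continuous ψ :=
    continuous_const.mul (hφc.comp ((continuous_const.sub continuous_id).const_smul t⁻¹))
  have hψb : ∀ y, ‖ψ y‖ ≤ (t ^ n)⁻¹ * 4 := by
    intro y
    rw [hψ]
    simp only [Real.norm_eq_abs, abs_mul]
    rw [abs_of_pos (by positivity : (0:ℝ) < (t ^ n)⁻¹)]
    exact mul_le_mul_of_nonneg_left (holder_bdd hn hα0 hα1 hφ _) (by positivity)
  have hint1 : Integrable (fun y => a y * ψ y) volume := by
    have := ha.bdd_mul hψc.aestronglyMeasurable (Filter.Eventually.of_forall hψb)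
    simpa [mul_comm] using this
  have hint2 : Integrable (fun y => a y * ψ x0) volume := ha.mul_const _
  have hzero2 : (∫ y, a y * ψ x0) = 0 := by
    rw [integral_mul_const, hzero, zero_mul]
  have hrw : convDil n a φ t x = ∫ y, (a y * ψ y - a y * ψ x0) := by
    rw [integral_sub hint1 hint2, hzero2, sub_zero]
    rfl
  rw [hrw]
  have hbound : ∀ y, ‖a y * ψ y - a y * ψ x0‖ ≤ |a y| * ((t ^ n)⁻¹ * (ρ / t) ^ α) := by
    intro y
    by_cases hy : a y = 0
    · simp [hy]
    have hyx0 : ‖y - x0‖ ≤ ρ := hsupp y hy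
    rw [← mul_sub, Real.norm_eq_abs, abs_mul]
    apply mul_le_mul_of_nonneg_left _ (abs_nonneg _)
    rw [hψ, ← mul_sub, abs_mul, abs_of_pos (by positivity : (0:ℝ) < (t ^ n)⁻¹)]
    apply mul_le_mul_of_nonneg_left _ (by positivity)
    have h1 : |φ (t⁻¹ • (x - y)) - φ (t⁻¹ • (x - x0))| ≤ ‖t⁻¹ • (x - y) - t⁻¹ • (x - x0)‖ ^ α :=
      hφ.2.2 _ _
    have h2 : ‖t⁻¹ • (x - y) - t⁻¹ • (x - x0)‖ = t⁻¹ * ‖y - x0‖ := by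
      rw [← smul_sub, norm_smul, Real.norm_eq_abs, abs_of_pos (inv_pos.2 ht)]
      congr 1
      rw [show x - y - (x - x0) = -(y - x0) by abel, norm_neg]
    calc |φ (t⁻¹ • (x - y)) - φ (t⁻¹ • (x - x0))| ≤ (t⁻¹ * ‖y - x0‖) ^ α := by rw [← h2]; exact h1
      _ ≤ (ρ / t) ^ α := by
          apply Real.rpow_le_rpow (by positivity) _ hα0.le
          rw [div_eq_inv_mul]
          exact mul_le_mul_of_nonneg_left hyx0 (by positivity)
  calc |∫ y, (a y * ψ y - a y * ψ x0)| ≤ ∫ y, ‖a y * ψ y - a y * ψ x0‖ := by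
        rw [← Real.norm_eq_abs]; exact norm_integral_le_integral_norm _
    _ ≤ ∫ y, |a y| * ((t ^ n)⁻¹ * (ρ / t) ^ α) := by
        apply integral_mono_of_nonneg (Filter.Eventually.of_forall fun y => norm_nonneg _)
          ((ha.abs).mul_const _) (Filter.Eventually.of_forall hbound)
    _ = (t ^ n)⁻¹ * (ρ / t) ^ α * ∫ y, |a y| := by
        rw [integral_mul_const]; ring

open MeasureTheory in
/-- Decay of the intrinsic g-function of an atom outside the expanded cube. -/
theorem gFun_atom_decay (n : ℕ) (hn : 1 ≤ n) (α : ℝ) (hα0 : 0 < α) (hα1 : α < 1)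
    (p : ℝ) (hpdef : p = n / (n + α))
    (w : EuclideanSpace ℝ (Fin n) → ℝ) (hw : ∀ x, 0 ≤ w x)
    (hloc : MeasureTheory.LocallyIntegrable w volume) :
    ∃ C > 0, ∀ (a : EuclideanSpace ℝ (Fin n) → ℝ) (x0 : EuclideanSpace ℝ (Fin n)) (r : ℝ)
      (x : EuclideanSpace ℝ (Fin n)),
      0 < r →
      MeasureTheory.Integrable a volume →
      Function.support a ⊆ cube n x0 r →
      (∫ y, a y) = 0 →
      0 < (∫ y in cube n x0 r, w y) →
      (∫ y in cube n x0 r, |a y|) ≤ r ^ n * (∫ y in cube n x0 r, w y) ^ (-(1 / p)) →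
      x ∉ cube n x0 (2 * Real.sqrt n * r) →
      gFun n α a x ≤
        ENNReal.ofReal (C * r ^ ((n : ℝ) + α) /
          ((∫ y in cube n x0 r, w y) ^ (1 / p) * ‖x - x0‖ ^ ((n : ℝ) + α))) := by
  have hn1 : (1:ℝ) ≤ (n:ℝ) := by exact_mod_cast hn
  have hsn : (1:ℝ) ≤ Real.sqrt n := by
    rw [show (1:ℝ) = Real.sqrt 1 by simp]
    exact Real.sqrt_le_sqrt hn1
  have hsn0 : (0:ℝ) < Real.sqrt n := lt_of_lt_of_le one_pos hsn
  set m : ℝ := (n:ℝ) + α with hmdef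
  have hm : 1 < m := by simp only [hmdef]; linarith
  have hm0 : 0 < m := by linarith
  refine ⟨Real.sqrt n ^ α * 2 ^ m,
    mul_pos (Real.rpow_pos_of_pos hsn0 α) (Real.rpow_pos_of_pos two_pos m), ?_⟩
  intro a x0 r x hr ha hsupp hzero hW hL hx
  set W : ℝ := ∫ y in cube n x0 r, w y with hWdef
  set D : ℝ := ‖x - x0‖ with hDdef
  set L : ℝ := ∫ y, |a y| with hLdef
  set ρ : ℝ := Real.sqrt n * (r / 2) with hρdef
  have hρ0 : 0 < ρ := by positivity
  have hL0 : 0 ≤ L := integral_nonneg fun y => abs_nonneg _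
  set K : ℝ := ρ ^ α * L with hKdef
  have hK0 : 0 ≤ K := by positivity
  -- distance facts
  have hD : Real.sqrt n * r < D := by
    simp only [cube, Set.mem_setOf_eq, not_forall] at hx
    obtain ⟨i, hi⟩ := hx
    push_neg at hi
    calc Real.sqrt n * r = 2 * Real.sqrt n * r / 2 := by ring
      _ < |x i - x0 i| := hi
      _ = |(x - x0) i| := by norm_num [PiLp.sub_apply]
      _ ≤ D := abs_coord_le_norm _ i
  have hD0 : 0 < D := lt_of_le_of_lt (by positivity) hD
  set T : ℝ := D / 2 with hTdef
  have hT0 : 0 < T := by positivity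
  -- support facts
  have hsuppρ : ∀ y, a y ≠ 0 → ‖y - x0‖ ≤ ρ := by
    intro y hy
    have hyQ : y ∈ cube n x0 r := hsupp (Function.mem_support.2 hy)
    refine norm_le_sqrt_mul _ _ (by positivity) fun i => ?_
    simpa [PiLp.sub_apply] using hyQ i
  have hfar : ∀ y, a y ≠ 0 → T ≤ ‖x - y‖ := by
    intro y hy
    have h1 : ‖y - x0‖ ≤ ρ := hsuppρ y hy
    have h2 : D ≤ ‖x - y‖ + ‖y - x0‖ := by
      calc D = ‖(x - y) + (y - x0)‖ := by rw [hDdef]; congr 1; abel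
        _ ≤ ‖x - y‖ + ‖y - x0‖ := norm_add_le _ _
    have hρT : ρ ≤ T := by
      rw [hρdef, hTdef]
      nlinarith
    linarith
  -- L equals the integral over the cube
  have hLQ : L = ∫ y in cube n x0 r, |a y| := by
    rw [hLdef]
    refine (setIntegral_eq_integral_of_forall_compl_eq_zero fun y hy => ?_).symm
    have : a y = 0 := by
      by_contra h
      exact hy (hsupp (Function.mem_support.2 h))
    simp [this]
  have hLbound : L ≤ r ^ n * W ^ (-(1 / p)) := by rw [hLQ]; exact hL
  -- intA bounds
  have hA0 : ∀ t : ℝ, 0 < t → t < T → intA n α a x t = 0 := by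
    intro t ht htT
    refine le_antisymm (iSup₂_le fun φ hφ => ?_) zero_le
    rw [conv_vanish hφ ht fun y hy => lt_of_lt_of_le htT (hfar y hy)]
    simp
  have hA1 : ∀ t : ℝ, 0 < t → intA n α a x t ≤ ENNReal.ofReal (K * t ^ (-m)) := by
    intro t ht
    refine iSup₂_le fun φ hφ => ENNReal.ofReal_le_ofReal ?_
    have := conv_bound hn hα0 hα1.le ha hzero hρ0.le hsuppρ hφ ht x
    calc |convDil n a φ t x| ≤ (t ^ n)⁻¹ * (ρ / t) ^ α * L := this
      _ = K * t ^ (-m) := by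
          rw [hKdef, Real.div_rpow hρ0.le ht.le, ← Real.rpow_natCast t n,
            ← Real.rpow_neg ht.le, hmdef, neg_add, Real.rpow_add ht,
            Real.rpow_neg ht.le α, Real.rpow_neg ht.le ((n:ℝ))]
          ring
  -- bound the square function integral
  have hIbound : (∫⁻ t in Ioi (0 : ℝ), (intA n α a x t) ^ 2 * (ENNReal.ofReal t)⁻¹) ≤
      ENNReal.ofReal (K ^ 2 * (T ^ (-(2*m)) / (2*m))) := by
    set g : ℝ → ℝ≥0∞ := fun t => ENNReal.ofReal (K ^ 2 * t ^ (-(2*m+1))) with hgdef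
    have hpoint : ∀ t ∈ Ioi (0:ℝ), (intA n α a x t) ^ 2 * (ENNReal.ofReal t)⁻¹ ≤
        (Ici T).indicator g t := by
      intro t ht
      simp only [mem_Ioi] at ht
      by_cases htT : T ≤ t
      · rw [show (Ici T).indicator g t = g t from Set.indicator_of_mem htT g]
        calc (intA n α a x t) ^ 2 * (ENNReal.ofReal t)⁻¹
            ≤ (ENNReal.ofReal (K * t ^ (-m))) ^ 2 * (ENNReal.ofReal t)⁻¹ := by
              exact mul_le_mul_left (pow_le_pow_left' (hA1 t ht) 2) _
          _ = g t := by
              rw [hgdef]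
              simp only []
              rw [← ENNReal.ofReal_pow (by positivity), ← ENNReal.ofReal_inv_of_pos ht,
                ← ENNReal.ofReal_mul (by positivity)]
              congr 1
              rw [mul_pow, ← Real.rpow_natCast (t ^ (-m)) 2, ← Real.rpow_mul ht.le,
                ← Real.rpow_neg_one t, mul_assoc, ← Real.rpow_add ht]
              congr 2
              push_cast; ring
      · push_neg at htT
        rw [hA0 t ht htT]
        simp
    have hlim : -(2*m+1) < -1 := by linarith
    have hint : Integrable (fun t : ℝ => K ^ 2 * t ^ (-(2*m+1))) (volume.restrict (Ioi T)) :=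
      (integrableOn_Ioi_rpow_of_lt hlim hT0).const_mul (K ^ 2)
    have hnn : 0 ≤ᵐ[volume.restrict (Ioi T)] fun t : ℝ => K ^ 2 * t ^ (-(2*m+1)) := by
      refine (ae_restrict_iff' measurableSet_Ioi).2 (Filter.Eventually.of_forall fun t ht => ?_)
      have ht0 : (0:ℝ) < t := lt_trans hT0 ht
      positivity
    calc (∫⁻ t in Ioi (0 : ℝ), (intA n α a x t) ^ 2 * (ENNReal.ofReal t)⁻¹)
        ≤ ∫⁻ t in Ioi (0:ℝ), (Ici T).indicator g t :=
          lintegral_mono_ae ((ae_restrict_iff' measurableSet_Ioi).2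
            (Filter.Eventually.of_forall hpoint))
      _ ≤ ∫⁻ t, (Ici T).indicator g t := setLIntegral_le_lintegral _ _
      _ = ∫⁻ t in Ici T, g t := lintegral_indicator measurableSet_Ici g
      _ = ∫⁻ t in Ioi T, g t := (setLIntegral_congr Ioi_ae_eq_Ici).symm
      _ = ENNReal.ofReal (∫ t in Ioi T, K ^ 2 * t ^ (-(2*m+1))) :=
          (ofReal_integral_eq_lintegral_ofReal hint hnn).symm
      _ = ENNReal.ofReal (K ^ 2 * (T ^ (-(2*m)) / (2*m))) := by
          rw [integral_const_mul, integral_Ioi_rpow_of_lt hlim hT0]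
          congr 1
          rw [show -(2*m+1) + 1 = -(2*m) by ring, neg_div_neg_eq]
  -- final assembly
  have hWP : (0:ℝ) < W ^ (1/p) := Real.rpow_pos_of_pos hW _
  have hDM : (0:ℝ) < D ^ m := Real.rpow_pos_of_pos hD0 _
  have hKle : K ≤ (Real.sqrt n ^ α * r ^ α) * (r ^ n * W ^ (-(1/p))) := by
    rw [hKdef]
    have h1 : ρ ^ α ≤ Real.sqrt n ^ α * r ^ α := by
      calc ρ ^ α ≤ (Real.sqrt n * r) ^ α := by
            apply Real.rpow_le_rpow hρ0.le _ hα0.le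
            rw [hρdef]
            nlinarith
        _ = Real.sqrt n ^ α * r ^ α := Real.mul_rpow hsn0.le hr.le
    have hrw0 : (0:ℝ) ≤ r ^ n * W ^ (-(1/p)) := by positivity
    exact mul_le_mul h1 hLbound hL0 (by positivity)
  have hTle : T ^ (-m) = 2 ^ m * (D ^ m)⁻¹ := by
    rw [hTdef, Real.rpow_neg (by positivity), Real.div_rpow hD0.le (by norm_num : (0:ℝ) ≤ 2),
      inv_div, div_eq_mul_inv]
  have hrm : r ^ (n:ℝ) * r ^ α = r ^ m := by
    rw [← Real.rpow_add hr, hmdef]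
  have hfinal : (K ^ 2 * (T ^ (-(2*m)) / (2*m))) ^ ((1:ℝ)/2) ≤
      Real.sqrt n ^ α * 2 ^ m * r ^ m / (W ^ (1/p) * D ^ m) := by
    have hs1 : K ^ 2 * (T ^ (-(2*m)) / (2*m)) ≤ (K * T ^ (-m)) ^ 2 := by
      have he : (K * T ^ (-m)) ^ 2 = K ^ 2 * T ^ (-(2*m)) := by
        rw [mul_pow, ← Real.rpow_natCast (T ^ (-m)) 2, ← Real.rpow_mul hT0.le]
        congr 2
        push_cast; ring
      rw [he]
      apply mul_le_mul_of_nonneg_left _ (sq_nonneg K)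
      exact div_le_self (by positivity) (by linarith)
    calc (K ^ 2 * (T ^ (-(2*m)) / (2*m))) ^ ((1:ℝ)/2)
        ≤ ((K * T ^ (-m)) ^ 2) ^ ((1:ℝ)/2) :=
          Real.rpow_le_rpow (by positivity) hs1 (by norm_num)
      _ = K * T ^ (-m) := by
          rw [← Real.rpow_natCast (K * T ^ (-m)) 2, ← Real.rpow_mul (by positivity)]
          norm_num
      _ ≤ ((Real.sqrt n ^ α * r ^ α) * (r ^ n * W ^ (-(1/p)))) * (2 ^ m * (D ^ m)⁻¹) := by
          rw [hTle]
          exact mul_le_mul_of_nonneg_right hKle (by positivity)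
      _ = Real.sqrt n ^ α * 2 ^ m * r ^ m / (W ^ (1/p) * D ^ m) := by
          rw [Real.rpow_neg hW.le, ← hrm, ← Real.rpow_natCast r n]
          field_simp
  calc gFun n α a x ≤ (ENNReal.ofReal (K ^ 2 * (T ^ (-(2*m)) / (2*m)))) ^ ((1:ℝ)/2) := by
        rw [gFun]
        exact ENNReal.rpow_le_rpow hIbound (by norm_num)
    _ = ENNReal.ofReal ((K ^ 2 * (T ^ (-(2*m)) / (2*m))) ^ ((1:ℝ)/2)) :=
        ENNReal.ofReal_rpow_of_nonneg (by positivity) (by norm_num)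
    _ ≤ ENNReal.ofReal (Real.sqrt n ^ α * 2 ^ m * r ^ m / (W ^ (1/p) * D ^ m)) :=
        ENNReal.ofReal_le_ofReal hfinal
end

section
/- Let $0 < \alpha < 1$, $p = n/(n+\alpha)$, and let $a$ be an integrable function supported in the cube $Q = Q(x_0, r)$ with $\int a = 0$ and $\int_Q |a(y)|\,dy \le |Q|\cdot w(Q)^{-1/p}$. Then for every positive integer $k$ and every $x \notin 2\sqrt{n}\,Q$, $S_{\alpha, 2^k}(a)(x)^2 \le C \cdot 2^{k(3n+2\alpha)} \cdot \frac{r^{2(n+\alpha)}}{w(Q)^{2/p}} \cdot \frac{1}{|x-x_0|^{2(n+\alpha)}}$, with $C$ depending only on $n$ and $\alpha$. -/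
open MeasureTheory Set Metric ENNReal

section AuxLemmas

variable {n : ℕ} {α : ℝ}

lemma abs_apply_le_norm (v : EuclideanSpace ℝ (Fin n)) (i : Fin n) : |v i| ≤ ‖v‖ := by
  rw [EuclideanSpace.norm_eq]
  have h1 : |v i| = Real.sqrt (‖v i‖ ^ 2) := by
    rw [Real.sqrt_sq_eq_abs, Real.norm_eq_abs, abs_abs]
  rw [h1]
  exact Real.sqrt_le_sqrt (Finset.single_le_sum (f := fun j => ‖v j‖ ^ 2)
    (fun j _ => by positivity) (Finset.mem_univ i))

lemma norm_sub_le_of_mem_cube' {x0 z : EuclideanSpace ℝ (Fin n)} {r : ℝ} (hr : 0 ≤ r)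
    (hz : z ∈ cube n x0 r) : ‖z - x0‖ ≤ Real.sqrt n * (r / 2) := by
  rw [EuclideanSpace.norm_eq]
  have h1 : ∀ i, ‖(z - x0) i‖ ^ 2 ≤ (r / 2) ^ 2 := by
    intro i
    have h2 : |z i - x0 i| ≤ r / 2 := hz i
    have h3 : (z - x0) i = z i - x0 i := rfl
    rw [h3, Real.norm_eq_abs]
    exact pow_le_pow_left₀ (abs_nonneg _) h2 2
  calc Real.sqrt (∑ i, ‖(z - x0) i‖ ^ 2) ≤ Real.sqrt (∑ _i : Fin n, (r / 2) ^ 2) :=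
        Real.sqrt_le_sqrt (Finset.sum_le_sum fun i _ => h1 i)
    _ = Real.sqrt ((n : ℝ) * (r / 2) ^ 2) := by
        rw [Finset.sum_const, Finset.card_univ, Fintype.card_fin, nsmul_eq_mul]
    _ = Real.sqrt n * (r / 2) := by
        rw [Real.sqrt_mul (by positivity), Real.sqrt_sq (by positivity)]

lemma scalar_id (k : ℕ) {c0 : ℝ} (L t : ℝ) (ht : 0 < t) (hc0 : 0 ≤ c0) :
    ((t ^ n)⁻¹ * (t⁻¹ * c0) ^ α * L) ^ 2 * (t ^ (n + 1))⁻¹ * ((2 : ℝ) ^ k * t) ^ n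
      = (((2 : ℝ) ^ k) ^ n * c0 ^ (2 * α) * L ^ 2) * t ^ (-(2 * ((n : ℝ) + α) + 1)) := by
  have h1 : (t⁻¹ * c0) ^ α = t ^ (-α) * c0 ^ α := by
    rw [Real.mul_rpow (inv_nonneg.2 ht.le) hc0, Real.inv_rpow ht.le, ← Real.rpow_neg ht.le]
  have h2 : ((t : ℝ) ^ n)⁻¹ = t ^ (-(n : ℝ)) := by
    rw [← Real.rpow_natCast t n, ← Real.rpow_neg ht.le]
  have h3 : ((t : ℝ) ^ (n + 1))⁻¹ = t ^ (-((n : ℝ) + 1)) := by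
    rw [← Real.rpow_natCast t (n + 1), ← Real.rpow_neg ht.le]
    push_cast
    ring_nf
  have h4 : (t : ℝ) ^ n = t ^ ((n : ℕ) : ℝ) := (Real.rpow_natCast t n).symm
  have h5 : (c0 ^ α) ^ 2 = c0 ^ (2 * α) := by
    rw [← Real.rpow_natCast (c0 ^ α) 2, ← Real.rpow_mul hc0]
    norm_num [mul_comm]
  have hstep : ((t ^ n)⁻¹ * (t⁻¹ * c0) ^ α * L) ^ 2 * (t ^ (n + 1))⁻¹ * ((2 : ℝ) ^ k * t) ^ n
      = (((2 : ℝ) ^ k) ^ n * (c0 ^ α) ^ 2 * L ^ 2) *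
        (t ^ (-(n : ℝ)) * t ^ (-(n : ℝ)) * (t ^ (-α) * t ^ (-α)) *
          t ^ (-((n : ℝ) + 1)) * t ^ ((n : ℕ) : ℝ)) := by
    rw [h1, h2, h3, mul_pow ((2:ℝ)^k) t, h4]
    ring
  rw [hstep, h5]
  congr 1
  rw [← Real.rpow_add ht, ← Real.rpow_add ht, ← Real.rpow_add ht, ← Real.rpow_add ht,
    ← Real.rpow_add ht]
  congr 1
  push_cast
  ring

lemma convDil_abs_le (hα0 : 0 < α) {a : EuclideanSpace ℝ (Fin n) → ℝ}
    {x0 : EuclideanSpace ℝ (Fin n)} {r : ℝ} (hr : 0 < r)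
    (ha : MeasureTheory.Integrable a volume) (hsupp : Function.support a ⊆ cube n x0 r)
    (hmean : (∫ y, a y) = 0) {φ : EuclideanSpace ℝ (Fin n) → ℝ} (hφ : φ ∈ holderClass n α)
    {t : ℝ} (ht : 0 < t) (y : EuclideanSpace ℝ (Fin n)) :
    |convDil n a φ t y| ≤
      (t ^ n)⁻¹ * (t⁻¹ * (Real.sqrt n * (r / 2))) ^ α * ∫ z in cube n x0 r, |a z| := by
  set c0 : ℝ := Real.sqrt n * (r / 2) with hc0
  have hc00 : 0 ≤ c0 := by positivity
  set L : ℝ := ∫ z in cube n x0 r, |a z| with hLdef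
  have hL0 : 0 ≤ L := MeasureTheory.integral_nonneg fun z => abs_nonneg _
  set c : ℝ := ((t : ℝ) ^ n)⁻¹ with hc
  have hcpos : 0 < c := by positivity
  have hD0 : 0 ≤ c * (t⁻¹ * c0) ^ α * L :=
    mul_nonneg (mul_nonneg hcpos.le (Real.rpow_nonneg (by positivity) α)) hL0
  rw [convDil]
  by_cases hI : MeasureTheory.Integrable (fun z => a z * (c * φ (t⁻¹ • (y - z)))) volume
  · obtain ⟨hφs, -, hφh⟩ := hφ
    set v : EuclideanSpace ℝ (Fin n) := t⁻¹ • (y - x0) with hv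
    have h2 : MeasureTheory.Integrable (fun z => a z * (c * φ v)) volume := ha.mul_const _
    have h3 : (∫ z, a z * (c * φ v)) = 0 := by
      rw [MeasureTheory.integral_mul_const, hmean, zero_mul]
    have h4 : (∫ z, a z * (c * φ (t⁻¹ • (y - z))))
        = ∫ z, a z * (c * (φ (t⁻¹ • (y - z)) - φ v)) := by
      rw [show (fun z => a z * (c * (φ (t⁻¹ • (y - z)) - φ v)))
          = fun z => a z * (c * φ (t⁻¹ • (y - z))) - a z * (c * φ v) from
            funext fun z => by ring]
      rw [MeasureTheory.integral_sub hI h2, h3, sub_zero]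
    rw [h4]
    have bound : ∀ z, |a z * (c * (φ (t⁻¹ • (y - z)) - φ v))| ≤ |a z| * (c * (t⁻¹ * c0) ^ α) := by
      intro z
      by_cases hz : a z = 0
      · simp [hz]
      · have hzQ : z ∈ cube n x0 r := hsupp hz
        have hnormeq : ‖t⁻¹ • (y - z) - v‖ = t⁻¹ * ‖z - x0‖ := by
          rw [hv, ← smul_sub, _root_.sub_sub_sub_cancel_left, norm_smul, Real.norm_eq_abs,
            abs_inv, abs_of_pos ht, norm_sub_rev]
        have hd : |φ (t⁻¹ • (y - z)) - φ v| ≤ (t⁻¹ * ‖z - x0‖) ^ α := by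
          have h5 := hφh (t⁻¹ • (y - z)) v
          rwa [hnormeq] at h5
        have hd2 : (t⁻¹ * ‖z - x0‖) ^ α ≤ (t⁻¹ * c0) ^ α :=
          Real.rpow_le_rpow (by positivity)
            (mul_le_mul_of_nonneg_left (norm_sub_le_of_mem_cube' hr.le hzQ)
              (inv_nonneg.2 ht.le)) hα0.le
        calc |a z * (c * (φ (t⁻¹ • (y - z)) - φ v))|
            = |a z| * (c * |φ (t⁻¹ • (y - z)) - φ v|) := by
              rw [abs_mul, abs_mul, abs_of_pos hcpos]
          _ ≤ |a z| * (c * (t⁻¹ * c0) ^ α) := by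
              have := hd.trans hd2
              gcongr
    have hbig : |∫ z, a z * (c * (φ (t⁻¹ • (y - z)) - φ v))|
        ≤ ∫ z, |a z| * (c * (t⁻¹ * c0) ^ α) := by
      rw [← Real.norm_eq_abs]
      refine (norm_integral_le_integral_norm _).trans ?_
      refine MeasureTheory.integral_mono_of_nonneg
        (Filter.Eventually.of_forall fun z => norm_nonneg _)
        (ha.abs.mul_const _) (Filter.Eventually.of_forall fun z => ?_)
      simp only [Real.norm_eq_abs]
      exact bound z
    have hsum : (∫ z, |a z| * (c * (t⁻¹ * c0) ^ α)) = L * (c * (t⁻¹ * c0) ^ α) := by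
      rw [MeasureTheory.integral_mul_const]
      congr 1
      rw [hLdef]
      exact (MeasureTheory.setIntegral_eq_integral_of_forall_compl_eq_zero fun z hz => by
        have : a z = 0 := by
          by_contra hne
          exact hz (hsupp hne)
        simp [this]).symm
    rw [hsum] at hbig
    calc |∫ z, a z * (c * (φ (t⁻¹ • (y - z)) - φ v))| ≤ L * (c * (t⁻¹ * c0) ^ α) := hbig
      _ = c * (t⁻¹ * c0) ^ α * L := by ring
  · rw [MeasureTheory.integral_undef hI]
    simpa using hD0

lemma convDil_eq_zero {a : EuclideanSpace ℝ (Fin n) → ℝ}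
    {x0 : EuclideanSpace ℝ (Fin n)} {r : ℝ}
    (hsupp : Function.support a ⊆ cube n x0 r)
    {φ : EuclideanSpace ℝ (Fin n) → ℝ} (hφ : φ ∈ holderClass n α)
    {t : ℝ} (ht : 0 < t) {y : EuclideanSpace ℝ (Fin n)}
    (hfar : ∀ z ∈ cube n x0 r, t < ‖y - z‖) :
    convDil n a φ t y = 0 := by
  rw [convDil]
  rw [show (fun z => a z * ((t ^ n)⁻¹ * φ (t⁻¹ • (y - z)))) = fun _ => (0 : ℝ) from ?_]
  · exact MeasureTheory.integral_zero _ _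
  funext z
  by_cases hz : a z = 0
  · simp [hz]
  have hzQ : z ∈ cube n x0 r := hsupp hz
  have h1 : 1 < ‖t⁻¹ • (y - z)‖ := by
    rw [norm_smul, Real.norm_eq_abs, abs_inv, abs_of_pos ht]
    have h2 := mul_lt_mul_of_pos_left (hfar z hzQ) (inv_pos.2 ht)
    rwa [inv_mul_cancel₀ ht.ne'] at h2
  have h3 : φ (t⁻¹ • (y - z)) = 0 := by
    by_contra hne
    have h4 := hφ.1 (Function.mem_support.2 hne)
    rw [mem_closedBall_zero_iff] at h4
    linarith
  simp [h3]

lemma intA_le_ofReal (hα0 : 0 < α) {a : EuclideanSpace ℝ (Fin n) → ℝ}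
    {x0 : EuclideanSpace ℝ (Fin n)} {r : ℝ} (hr : 0 < r)
    (ha : MeasureTheory.Integrable a volume) (hsupp : Function.support a ⊆ cube n x0 r)
    (hmean : (∫ y, a y) = 0) {t : ℝ} (ht : 0 < t) (y : EuclideanSpace ℝ (Fin n)) :
    intA n α a y t ≤ ENNReal.ofReal
      ((t ^ n)⁻¹ * (t⁻¹ * (Real.sqrt n * (r / 2))) ^ α * ∫ z in cube n x0 r, |a z|) := by
  rw [intA]
  exact iSup₂_le fun φ hφ =>
    ENNReal.ofReal_le_ofReal (convDil_abs_le hα0 hr ha hsupp hmean hφ ht y)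

lemma intA_eq_zero {a : EuclideanSpace ℝ (Fin n) → ℝ}
    {x0 : EuclideanSpace ℝ (Fin n)} {r : ℝ}
    (hsupp : Function.support a ⊆ cube n x0 r)
    {t : ℝ} (ht : 0 < t) {y : EuclideanSpace ℝ (Fin n)}
    (hfar : ∀ z ∈ cube n x0 r, t < ‖y - z‖) :
    intA n α a y t = 0 := by
  rw [intA]
  refine le_antisymm (iSup₂_le fun φ hφ => ?_) (zero_le)
  rw [convDil_eq_zero hsupp hφ ht hfar]
  simp

end AuxLemmas

open MeasureTheory

/-- Decay of the aperture-`2^k` square function of an atom outside the expanded cube. -/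
theorem sFun_dyadic_atom_decay (n : ℕ) (hn : 1 ≤ n) (α : ℝ) (hα0 : 0 < α) (hα1 : α < 1)
    (p : ℝ) (hpdef : p = n / (n + α))
    (w : EuclideanSpace ℝ (Fin n) → ℝ) (hw : ∀ x, 0 ≤ w x)
    (hloc : MeasureTheory.LocallyIntegrable w volume) :
    ∃ C > 0, ∀ (a : EuclideanSpace ℝ (Fin n) → ℝ) (x0 : EuclideanSpace ℝ (Fin n)) (r : ℝ)
      (x : EuclideanSpace ℝ (Fin n)) (k : ℕ),
      1 ≤ k → 0 < r →
      MeasureTheory.Integrable a volume →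
      Function.support a ⊆ cube n x0 r →
      (∫ y, a y) = 0 →
      0 < (∫ y in cube n x0 r, w y) →
      (∫ y in cube n x0 r, |a y|) ≤ r ^ n * (∫ y in cube n x0 r, w y) ^ (-(1 / p)) →
      x ∉ cube n x0 (2 * Real.sqrt n * r) →
      (sFun n α ((2 : ℝ) ^ k) a x) ^ 2 ≤
        ENNReal.ofReal (C * (2 : ℝ) ^ ((k : ℝ) * (3 * n + 2 * α)) *
          (r ^ (2 * ((n : ℝ) + α)) /
            ((∫ y in cube n x0 r, w y) ^ (2 / p) * ‖x - x0‖ ^ (2 * ((n : ℝ) + α))))) := by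
  haveI : Nonempty (Fin n) := ⟨⟨0, hn⟩⟩
  haveI : Nontrivial (EuclideanSpace ℝ (Fin n)) := inferInstance
  set B : ℝ≥0∞ := volume (ball (0 : EuclideanSpace ℝ (Fin n)) 1) with hB
  have hBne : B ≠ ⊤ := measure_ball_lt_top.ne
  have hB0 : 0 < B := measure_ball_pos _ _ one_pos
  have hCb0 : 0 < B.toReal := ENNReal.toReal_pos hB0.ne' hBne
  have hn0 : (0 : ℝ) < n := by exact_mod_cast hn
  set s : ℝ := 2 * ((n : ℝ) + α) with hs
  have hs0 : 0 < s := by rw [hs]; nlinarith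
  have hsqn : (0 : ℝ) < Real.sqrt n := Real.sqrt_pos.2 hn0
  refine ⟨B.toReal * (Real.sqrt n / 2) ^ (2 * α) * 4 ^ s / s, by positivity, ?_⟩
  intro a x0 r x k hk hr ha hsupp hmean hwQ hatom hxQ
  set X : ℝ := ‖x - x0‖ with hX
  set wQ : ℝ := ∫ y in cube n x0 r, w y with hwQdef
  set L : ℝ := ∫ z in cube n x0 r, |a z| with hLdef
  have hL0 : 0 ≤ L := integral_nonneg fun z => abs_nonneg _
  set c0 : ℝ := Real.sqrt n * (r / 2) with hc0
  have hc00 : 0 ≤ c0 := by positivity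
  -- geometry
  have hxQ' : ∃ i, Real.sqrt n * r < |x i - x0 i| := by
    by_contra h
    push_neg at h
    refine hxQ fun i => ?_
    rw [show 2 * Real.sqrt n * r / 2 = Real.sqrt n * r from by ring]
    exact h i
  obtain ⟨i, hi⟩ := hxQ'
  have hXlow : Real.sqrt n * r < X := by
    refine lt_of_lt_of_le hi ?_
    have h := abs_apply_le_norm (x - x0) i
    simpa using h
  have hX0 : 0 < X := lt_trans (by positivity) hXlow
  set T : ℝ := X / 2 ^ (k + 2) with hT
  have hT0 : 0 < T := by rw [hT]; positivity
  set e : ℝ := -(s + 1) with he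
  have hel : e < -1 := by rw [he]; linarith
  set K : ℝ := ((2 : ℝ) ^ k) ^ n * c0 ^ (2 * α) * L ^ 2 with hK
  have hK0 : 0 ≤ K := by
    refine mul_nonneg (mul_nonneg (by positivity) (Real.rpow_nonneg hc00 _)) (sq_nonneg L)
  -- vanishing region
  have hvanish : ∀ t : ℝ, 0 < t → t ≤ T → ∀ y ∈ ball x ((2 : ℝ) ^ k * t),
      intA n α a y t = 0 := by
    intro t ht htT y hy
    refine intA_eq_zero hsupp ht fun z hz => ?_
    have h1 : ‖z - x0‖ ≤ c0 := norm_sub_le_of_mem_cube' hr.le hz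
    have h2 : X - ‖z - x0‖ ≤ ‖x - z‖ := by
      have h3 := norm_sub_norm_le (x - x0) (z - x0)
      rwa [sub_sub_sub_cancel_right] at h3
    have h4 : ‖x - z‖ ≤ ‖x - y‖ + ‖y - z‖ := by
      calc ‖x - z‖ = ‖(x - y) + (y - z)‖ := by rw [sub_add_sub_cancel]
        _ ≤ _ := norm_add_le _ _
    have h5 : ‖x - y‖ < (2 : ℝ) ^ k * t := by
      rw [← dist_eq_norm, dist_comm]
      exact mem_ball.1 hy
    have hc0X : c0 ≤ X / 2 := by
      rw [hc0]
      nlinarith [hXlow]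
    have h6 : t * 2 ^ (k + 2) ≤ X := by
      rw [hT] at htT
      exact (le_div_iff₀ (by positivity)).1 htT
    have h7 : t * 2 ^ (k + 2) = 4 * ((2 : ℝ) ^ k * t) := by
      rw [pow_add]; ring
    have h8 : t ≤ (2 : ℝ) ^ k * t := le_mul_of_one_le_left ht.le (one_le_pow₀ (by norm_num))
    linarith
  -- square of sFun
  have hsq : (sFun n α ((2 : ℝ) ^ k) a x) ^ 2 = ∫⁻ t in Ioi (0 : ℝ),
      ∫⁻ y in ball x ((2 : ℝ) ^ k * t),
        (intA n α a y t) ^ 2 * (ENNReal.ofReal (t ^ (n + 1)))⁻¹ := by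
    rw [sFun, ← ENNReal.rpow_natCast _ 2, ← ENNReal.rpow_mul]
    norm_num
  -- pointwise-in-t bound
  have key : ∀ t ∈ Ioi (0 : ℝ),
      (∫⁻ y in ball x ((2 : ℝ) ^ k * t),
        (intA n α a y t) ^ 2 * (ENNReal.ofReal (t ^ (n + 1)))⁻¹)
      ≤ (Ioi T).indicator (fun t => B * ENNReal.ofReal (K * t ^ e)) t := by
    intro t ht
    rw [mem_Ioi] at ht
    by_cases htT : T < t
    · rw [indicator_of_mem (mem_Ioi.2 htT)]
      have hD0 : 0 ≤ (t ^ n)⁻¹ * (t⁻¹ * c0) ^ α * L :=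
        mul_nonneg (mul_nonneg (by positivity) (Real.rpow_nonneg (by positivity) _)) hL0
      have h2t : (0 : ℝ) < (2 : ℝ) ^ k * t := by positivity
      calc ∫⁻ y in ball x ((2 : ℝ) ^ k * t),
            (intA n α a y t) ^ 2 * (ENNReal.ofReal (t ^ (n + 1)))⁻¹
          ≤ ∫⁻ _y in ball x ((2 : ℝ) ^ k * t),
              (ENNReal.ofReal ((t ^ n)⁻¹ * (t⁻¹ * c0) ^ α * L)) ^ 2 *
                (ENNReal.ofReal (t ^ (n + 1)))⁻¹ :=
            setLIntegral_mono' measurableSet_ball fun y _ =>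
              mul_le_mul_left
                (pow_le_pow_left' (intA_le_ofReal hα0 hr ha hsupp hmean ht y) 2) _
        _ = (ENNReal.ofReal ((t ^ n)⁻¹ * (t⁻¹ * c0) ^ α * L)) ^ 2 *
              (ENNReal.ofReal (t ^ (n + 1)))⁻¹ * volume (ball x ((2 : ℝ) ^ k * t)) :=
            setLIntegral_const _ _
        _ = (ENNReal.ofReal ((t ^ n)⁻¹ * (t⁻¹ * c0) ^ α * L)) ^ 2 *
              (ENNReal.ofReal (t ^ (n + 1)))⁻¹ *
              (ENNReal.ofReal (((2 : ℝ) ^ k * t) ^ n) * B) := by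
            rw [Measure.addHaar_ball volume x h2t.le, finrank_euclideanSpace_fin]
        _ = ENNReal.ofReal (((t ^ n)⁻¹ * (t⁻¹ * c0) ^ α * L) ^ 2 * (t ^ (n + 1))⁻¹ *
              ((2 : ℝ) ^ k * t) ^ n) * B := by
            rw [← ENNReal.ofReal_pow hD0, ← ENNReal.ofReal_inv_of_pos (pow_pos ht (n + 1)),
              ← ENNReal.ofReal_mul (by positivity), ← mul_assoc,
              ← ENNReal.ofReal_mul (by positivity)]
        _ = B * ENNReal.ofReal (K * t ^ e) := by
            rw [scalar_id k L t ht hc00, hK, he, hs]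
            rw [mul_comm]
    · rw [indicator_of_notMem (fun h => htT (mem_Ioi.1 h))]
      have h0 : ∀ y ∈ ball x ((2 : ℝ) ^ k * t),
          (intA n α a y t) ^ 2 * (ENNReal.ofReal (t ^ (n + 1)))⁻¹ = 0 := fun y hy => by
        rw [hvanish t ht (not_lt.1 htT) y hy]
        simp
      calc (∫⁻ y in ball x ((2 : ℝ) ^ k * t),
            (intA n α a y t) ^ 2 * (ENNReal.ofReal (t ^ (n + 1)))⁻¹)
          ≤ ∫⁻ _y in ball x ((2 : ℝ) ^ k * t), 0 :=
            setLIntegral_mono' measurableSet_ball fun y hy => le_of_eq (h0 y hy)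
        _ = 0 := lintegral_zero
  -- assemble
  have hIoiT : Ioi T ⊆ Ioi (0 : ℝ) := Ioi_subset_Ioi hT0.le
  have hint : IntegrableOn (fun t : ℝ => t ^ e) (Ioi T) := integrableOn_Ioi_rpow_of_lt hel hT0
  have hintK : IntegrableOn (fun t : ℝ => K * t ^ e) (Ioi T) := hint.const_mul K
  have hae : 0 ≤ᵐ[volume.restrict (Ioi T)] fun t : ℝ => K * t ^ e :=
    (ae_restrict_iff' measurableSet_Ioi).2 (Filter.Eventually.of_forall fun t ht' =>
      mul_nonneg hK0 (Real.rpow_nonneg (le_of_lt (hT0.trans ht')) _))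
  -- the real-number inequality
  have hV : -T ^ (e + 1) / (e + 1) = T ^ (-s) / s := by
    rw [show e + 1 = -s from by rw [he]; ring, neg_div_neg_eq]
  have hL2 : L ^ 2 ≤ r ^ (n * 2) * wQ ^ (-(2 / p)) := by
    have h1 : L ^ 2 ≤ (r ^ n * wQ ^ (-(1 / p))) ^ 2 := pow_le_pow_left₀ hL0 hatom 2
    have h2 : (r ^ n * wQ ^ (-(1 / p))) ^ 2 = r ^ (n * 2) * wQ ^ (-(2 / p)) := by
      rw [mul_pow, ← pow_mul, ← Real.rpow_natCast (wQ ^ (-(1 / p))) 2,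
        ← Real.rpow_mul hwQ.le, show -(1 / p) * ((2 : ℕ) : ℝ) = -(2 / p) from by
          push_cast; ring]
    rwa [h2] at h1
  have hT' : T ^ (-s) = ((2 : ℝ) ^ k) ^ s * 4 ^ s / X ^ s := by
    rw [hT, Real.rpow_neg (by positivity), Real.div_rpow hX0.le (by positivity),
      show ((2 : ℝ) ^ (k + 2)) = (2 : ℝ) ^ k * 4 from by rw [pow_add]; norm_num,
      Real.mul_rpow (by positivity) (by norm_num), inv_div]
  have hP : ((2 : ℝ) ^ k) ^ n * ((2 : ℝ) ^ k) ^ s = 2 ^ ((k : ℝ) * (3 * (n : ℝ) + 2 * α)) := by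
    rw [← Real.rpow_natCast ((2 : ℝ) ^ k) n, ← Real.rpow_natCast (2 : ℝ) k,
      ← Real.rpow_mul (by norm_num), ← Real.rpow_mul (by norm_num),
      ← Real.rpow_add (by norm_num)]
    congr 1
    rw [hs]; ring
  have hRr : r ^ (2 * α) * r ^ (n * 2) = r ^ s := by
    rw [← Real.rpow_natCast r (n * 2), ← Real.rpow_add hr, hs]
    congr 1
    push_cast; ring
  have hc0s : c0 ^ (2 * α) = (Real.sqrt n / 2) ^ (2 * α) * r ^ (2 * α) := by
    rw [hc0, show Real.sqrt n * (r / 2) = Real.sqrt n / 2 * r from by ring,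
      Real.mul_rpow (by positivity) hr.le]
  have hW : wQ ^ (-(2 / p)) = (wQ ^ (2 / p))⁻¹ := Real.rpow_neg hwQ.le _
  have hreal : B.toReal * (K * (-T ^ (e + 1) / (e + 1))) ≤
      B.toReal * (Real.sqrt n / 2) ^ (2 * α) * 4 ^ s / s *
        2 ^ ((k : ℝ) * (3 * (n : ℝ) + 2 * α)) * (r ^ s / (wQ ^ (2 / p) * X ^ s)) := by
    rw [hV]
    have hTs : 0 ≤ T ^ (-s) / s := div_nonneg (Real.rpow_nonneg hT0.le _) hs0.le
    calc B.toReal * (K * (T ^ (-s) / s))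
        ≤ B.toReal * ((((2 : ℝ) ^ k) ^ n * c0 ^ (2 * α) *
            (r ^ (n * 2) * wQ ^ (-(2 / p)))) * (T ^ (-s) / s)) := by
          rw [hK]
          refine mul_le_mul_of_nonneg_left (mul_le_mul_of_nonneg_right ?_ hTs)
            ENNReal.toReal_nonneg
          refine mul_le_mul_of_nonneg_left hL2 ?_
          exact mul_nonneg (by positivity) (Real.rpow_nonneg hc00 _)
      _ = B.toReal * (Real.sqrt n / 2) ^ (2 * α) * 4 ^ s / s *
            2 ^ ((k : ℝ) * (3 * (n : ℝ) + 2 * α)) * (r ^ s / (wQ ^ (2 / p) * X ^ s)) := by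
          rw [hT', hc0s, hW, ← hP, ← hRr]
          ring
  calc (sFun n α ((2 : ℝ) ^ k) a x) ^ 2
      = ∫⁻ t in Ioi (0 : ℝ), ∫⁻ y in ball x ((2 : ℝ) ^ k * t),
          (intA n α a y t) ^ 2 * (ENNReal.ofReal (t ^ (n + 1)))⁻¹ := hsq
    _ ≤ ∫⁻ t in Ioi (0 : ℝ),
          (Ioi T).indicator (fun t => B * ENNReal.ofReal (K * t ^ e)) t :=
        setLIntegral_mono' measurableSet_Ioi key
    _ = ∫⁻ t in Ioi T, B * ENNReal.ofReal (K * t ^ e) := by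
        rw [lintegral_indicator measurableSet_Ioi,
          Measure.restrict_restrict measurableSet_Ioi, inter_eq_self_of_subset_left hIoiT]
    _ = B * ∫⁻ t in Ioi T, ENNReal.ofReal (K * t ^ e) := lintegral_const_mul' _ _ hBne
    _ = B * ENNReal.ofReal (∫ t in Ioi T, K * t ^ e) := by
        rw [ofReal_integral_eq_lintegral_ofReal hintK hae]
    _ = B * ENNReal.ofReal (K * (-T ^ (e + 1) / (e + 1))) := by
        rw [integral_const_mul, integral_Ioi_rpow_of_lt hel hT0]
    _ = ENNReal.ofReal (B.toReal * (K * (-T ^ (e + 1) / (e + 1)))) := by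
        rw [ENNReal.ofReal_mul ENNReal.toReal_nonneg, ENNReal.ofReal_toReal hBne]
    _ ≤ _ := ENNReal.ofReal_le_ofReal hreal
end
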